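/- Let r > 0 be an integer such that the set of irreducible r-markings on the curve Γ is nonempty. Then for any pair of distinct components C, C' of Γ with C.C' > 0 and for any node q ∈ C ∩ C', there exist irreducible r-markings μ and μ' such that q occurs in μ and q does not occur in μ'. -/

import Mathlib

namespace SeveriMarkings

/-- Components of the curve Γ: `L_1, …, L_d` (left) and `F_1, …, F_k` (right). -/
abbrev Comp (d k : ℕ) := Sum (Fin d) (Fin k)

/-- Nodes (edges of the multigraph `G(n,d,k)`): `n` edges between `L_i` and `L_j` for `i < j`,
and one edge between each `L_i` and each `F_j`. -/
abbrev Node (n d k : ℕ) :=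
  Sum (({p : Fin d × Fin d // p.1 < p.2}) × Fin n) (Fin d × Fin k)

/-- The two endpoints of a node. -/
def ends {n d k : ℕ} : Node n d k → Comp d k × Comp d k
  | Sum.inl e => (Sum.inl e.1.1.1, Sum.inl e.1.1.2)
  | Sum.inr e => (Sum.inl e.1, Sum.inr e.2)

/-- `joins e C C'` means the node `e` lies in `C ∩ C'`. -/
def joins {n d k : ℕ} (e : Node n d k) (C C' : Comp d k) : Prop :=
  ends e = (C, C') ∨ ends e = (C', C)

/-- `touches e C` means the node `e` is incident to the component `C`. -/
def touches {n d k : ℕ} (e : Node n d k) (C : Comp d k) : Prop :=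
  (ends e).1 = C ∨ (ends e).2 = C

/-- The simple graph on the components obtained after deleting a set `E` of edges:
two components are adjacent if some remaining edge joins them. Its connectivity is
equivalent to connectivity of the multigraph obtained from `G(n,d,k)` by deleting `E`. -/
def remGraph (n d k : ℕ) (E : Set (Node n d k)) : SimpleGraph (Comp d k) :=
  SimpleGraph.fromRel (fun u v => ∃ e, e ∉ E ∧ ends e = (u, v))

/-- A marking `μ` (an injective tuple of nodes) is irreducible if deleting its entries
from `G(n,d,k)` leaves a connected (multi)graph. -/
def IsIrreducible {n d k r : ℕ} (μ : Fin r → Node n d k) : Prop :=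
  (remGraph n d k (Set.range μ)).Connected

/-- The intersection number `C.C'`: the number of edges between `C` and `C'`. -/
noncomputable def interNum (n d k : ℕ) (C C' : Comp d k) : ℕ :=
  Nat.card {e : Node n d k // joins e C C'}

/-- `μ_{C,C'}`: the number of entries of `μ` lying in `C ∩ C'`. -/
noncomputable def markCount {n d k r : ℕ} (μ : Fin r → Node n d k) (C C' : Comp d k) : ℕ :=
  Nat.card {i : Fin r // joins (μ i) C C'}

/-- `μ_C`: the number of entries of `μ` incident to `C`. -/
noncomputable def compCount {n d k r : ℕ} (μ : Fin r → Node n d k) (C : Comp d k) : ℕ :=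
  Nat.card {i : Fin r // touches (μ i) C}

/-- A single D-move. -/
def DMove {n d k r : ℕ} (μ μ' : Fin r → Node n d k) : Prop :=
  ∃ (D D' : Comp d k) (q q' : Node n d k),
    D ≠ D' ∧ q ≠ q' ∧ joins q D D' ∧ joins q' D D' ∧
    ( (q ∉ Set.range μ ∧ ∃ i, μ i = q' ∧ μ' = Function.update μ i q)
    ∨ (q' ∉ Set.range μ ∧ ∃ i, μ i = q ∧ μ' = Function.update μ i q')
    ∨ (∃ i j, μ i = q ∧ μ j = q' ∧ μ' = μ ∘ Equiv.swap i j)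
    ∨ (q ∉ Set.range μ ∧ q' ∉ Set.range μ ∧ μ' = μ) )

/-- A single T-move. -/
def TMove {n d k r : ℕ} (μ μ' : Fin r → Node n d k) : Prop :=
  ∃ (D D' D'' : Comp d k) (q q' q'' : Node n d k),
    D ≠ D' ∧ D ≠ D'' ∧ D' ≠ D'' ∧
    joins q D' D'' ∧ joins q' D D'' ∧ joins q'' D D' ∧
    ( (q' ∈ Set.range μ ∧ μ' = μ)
    ∨ (q' ∉ Set.range μ ∧
        ( (q'' ∉ Set.range μ ∧ ∃ i, μ i = q ∧ μ' = Function.update μ i q'')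
        ∨ (q ∉ Set.range μ ∧ ∃ i, μ i = q'' ∧ μ' = Function.update μ i q)
        ∨ (∃ i j, μ i = q ∧ μ j = q'' ∧ μ' = μ ∘ Equiv.swap i j)
        ∨ (q ∉ Set.range μ ∧ q'' ∉ Set.range μ ∧ μ' = μ))) )

/-- Equivalence of markings: a finite sequence of D-moves and T-moves. -/
def MarkEquiv {n d k r : ℕ} (μ μ' : Fin r → Node n d k) : Prop :=
  Relation.ReflTransGen (fun a b => DMove a b ∨ TMove a b) μ μ'

/-- Property (*) relative to the distinguished component `Ld`. -/
def PropertyStar {n d k r : ℕ} (Ld : Comp d k) (μ : Fin r → Node n d k) : Prop :=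
  ∀ C C' : Comp d k, C ≠ C' →
    markCount μ C C' =
      if Ld = C ∨ Ld = C' then interNum n d k C C' - 1 else interNum n d k C C'

section AuxGraph

open Finset in
theorem conn_card_le {V : Type*} [Fintype V] [DecidableEq V] (H : SimpleGraph V)
    [Fintype H.edgeSet] (hc : H.Connected) :
    Fintype.card V ≤ H.edgeFinset.card + 1 := by
  obtain ⟨ρ⟩ := hc.nonempty
  have hstep : ∀ v : V, ∃ w : V, v ≠ ρ → H.Adj v w ∧ H.dist w ρ + 1 = H.dist v ρ := by
    intro v
    by_cases hv : v = ρ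
    · exact ⟨ρ, fun h => absurd hv h⟩
    · obtain ⟨p, hp⟩ := hc.exists_walk_length_eq_dist v ρ
      cases p with
      | nil => exact absurd rfl hv
      | @cons _ w _ h q =>
        refine ⟨w, fun _ => ⟨h, ?_⟩⟩
        have h1 : H.dist w ρ ≤ q.length := H.dist_le q
        have h2 : H.dist v ρ ≤ H.dist v w + H.dist w ρ := hc.dist_triangle
        have h3 : H.dist v w ≤ 1 := H.dist_le (h.toWalk)
        simp only [SimpleGraph.Walk.length_cons] at hp
        omega
  choose w hw using hstep
  have key : (univ.erase ρ).card ≤ H.edgeFinset.card := by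
    apply Finset.card_le_card_of_injOn (fun v => s(v, w v))
    · intro v hv
      rw [Finset.mem_coe, SimpleGraph.mem_edgeFinset]
      exact (hw v (Finset.mem_erase.mp hv).1).1
    · intro a ha b hb hab
      have ha' := (Finset.mem_erase.mp ha).1
      have hb' := (Finset.mem_erase.mp hb).1
      rw [Sym2.eq, Sym2.rel_iff', Prod.mk.injEq, Prod.mk.injEq] at hab
      rcases hab with ⟨h1, _⟩ | ⟨h1, h2⟩
      · exact h1
      · exfalso
        simp only [Prod.fst_swap, Prod.snd_swap] at h1 h2
        have da := (hw a ha').2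
        have db := (hw b hb').2
        rw [← h1] at db
        rw [h2] at da
        omega
  rw [Finset.card_erase_of_mem (Finset.mem_univ ρ), Finset.card_univ] at key
  have : 0 < Fintype.card V := Fintype.card_pos_iff.mpr ⟨ρ⟩
  omega

end AuxGraph

section Aux

variable {n d k : ℕ}

lemma ends_ne (e : Node n d k) : (ends e).1 ≠ (ends e).2 := by
  cases e with
  | inl e =>
    simp only [ends, ne_eq, Sum.inl.injEq]
    exact ne_of_lt e.1.2
  | inr e => simp [ends]

lemma joins_ne {e : Node n d k} {u v : Comp d k} (h : joins e u v) : u ≠ v := by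
  rcases h with h | h
  · have := ends_ne e
    rw [h] at this
    exact this
  · have := ends_ne e
    rw [h] at this
    exact this.symm

lemma joins_symm {e : Node n d k} {u v : Comp d k} (h : joins e u v) : joins e v u :=
  h.symm

lemma remGraph_mono {E E' : Set (Node n d k)} (h : E ⊆ E') :
    remGraph n d k E' ≤ remGraph n d k E := by
  intro u v huv
  rw [remGraph, SimpleGraph.fromRel_adj] at huv ⊢
  refine ⟨huv.1, ?_⟩
  rcases huv.2 with ⟨e, he, hee⟩ | ⟨e, he, hee⟩
  · exact Or.inl ⟨e, fun hc => he (h hc), hee⟩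
  · exact Or.inr ⟨e, fun hc => he (h hc), hee⟩

lemma adj_of_kept {K : Finset (Node n d k)} {e : Node n d k} (he : e ∈ K)
    {u v : Comp d k} (hj : joins e u v) : (remGraph n d k (↑K)ᶜ).Adj u v := by
  rw [remGraph, SimpleGraph.fromRel_adj]
  refine ⟨joins_ne hj, ?_⟩
  rcases hj with h | h
  · exact Or.inl ⟨e, by simp [he], h⟩
  · exact Or.inr ⟨e, by simp [he], h⟩

lemma card_comp : Fintype.card (Comp d k) = d + k := by simp

lemma tree_conn (hd : 0 < d) (ρ : Comp d k) (K : Finset (Node n d k))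
    (h : ∀ v, v ≠ ρ → (∃ e ∈ K, joins e v ρ) ∨
      (∃ w, (∃ e ∈ K, joins e v w) ∧ (∃ e ∈ K, joins e w ρ))) :
    (remGraph n d k (↑K)ᶜ).Connected := by
  have hreach : ∀ v, (remGraph n d k (↑K)ᶜ).Reachable v ρ := by
    intro v
    by_cases hv : v = ρ
    · exact hv ▸ SimpleGraph.Reachable.refl v
    · rcases h v hv with ⟨e, he, hj⟩ | ⟨w, ⟨e, he, hj⟩, ⟨e', he', hj'⟩⟩
      · exact (adj_of_kept he hj).reachable
      · exact (adj_of_kept he hj).reachable.trans (adj_of_kept he' hj').reachable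
  haveI : Nonempty (Comp d k) := ⟨Sum.inl ⟨0, hd⟩⟩
  exact ⟨fun u v => (hreach u).trans (hreach v).symm⟩

/-- The kept edges of a "tree" rooted at `ρ` with parent-edge assignment `κ`. -/
def treeK (ρ : Comp d k) (κ : Comp d k → Node n d k) : Finset (Node n d k) :=
  (Finset.univ.erase ρ).image κ

lemma treeK_card (ρ : Comp d k) (κ : Comp d k → Node n d k) :
    (treeK ρ κ).card ≤ d + k - 1 := by
  refine le_trans Finset.card_image_le ?_
  rw [Finset.card_erase_of_mem (Finset.mem_univ _), Finset.card_univ, card_comp]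

lemma mem_treeK {ρ : Comp d k} {κ : Comp d k → Node n d k} {v : Comp d k} (hv : v ≠ ρ) :
    κ v ∈ treeK ρ κ :=
  Finset.mem_image_of_mem _ (Finset.mem_erase.mpr ⟨hv, Finset.mem_univ _⟩)

lemma mem_treeK_iff {ρ : Comp d k} {κ : Comp d k → Node n d k} {e : Node n d k} :
    e ∈ treeK ρ κ ↔ ∃ v, v ≠ ρ ∧ κ v = e := by
  simp [treeK, Finset.mem_image, Finset.mem_erase]

lemma exists_mu {r : ℕ} (S : Finset (Node n d k)) (h : S.card = r) :
    ∃ μ : Fin r → Node n d k, Function.Injective μ ∧ Set.range μ = ↑S := by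
  refine ⟨fun i => (S.equivFin.symm (Fin.cast h.symm i)).1, ?_, ?_⟩
  · intro i j hij
    have := S.equivFin.symm.injective (Subtype.ext hij)
    simpa [Fin.ext_iff] using congrArg Fin.val this
  · ext x
    constructor
    · rintro ⟨i, rfl⟩
      exact (S.equivFin.symm (Fin.cast h.symm i)).2
    · intro hx
      refine ⟨Fin.cast h (S.equivFin ⟨x, hx⟩), ?_⟩
      simp [Fin.cast]

lemma counting {r : ℕ} (q : Node n d k)
    (hex : ∃ μ : Fin r → Node n d k, Function.Injective μ ∧ IsIrreducible μ) :
    d + k - 1 + r ≤ Fintype.card (Node n d k) := by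
  classical
  obtain ⟨μ, hinj, hirr⟩ := hex
  set H := remGraph n d k (Set.range μ) with hH
  haveI : Fintype H.edgeSet := Fintype.ofFinite _
  have h1 : Fintype.card (Comp d k) ≤ H.edgeFinset.card + 1 := conn_card_le H hirr
  have hwit : ∀ e : Sym2 (Comp d k), ∃ g : Node n d k,
      e ∈ H.edgeSet → g ∉ Set.range μ ∧ s((ends g).1, (ends g).2) = e := by
    intro e
    induction e using Sym2.inductionOn with
    | hf u v =>
      by_cases he : s(u, v) ∈ H.edgeSet
      · rw [SimpleGraph.mem_edgeSet, hH, remGraph, SimpleGraph.fromRel_adj] at he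
        rcases he.2 with ⟨g, hg, hgg⟩ | ⟨g, hg, hgg⟩
        · exact ⟨g, fun _ => ⟨hg, by rw [hgg]⟩⟩
        · exact ⟨g, fun _ => ⟨hg, by rw [hgg]; exact Sym2.eq_swap⟩⟩
      · exact ⟨q, fun h => absurd h he⟩
  choose g hg using hwit
  have h2 : H.edgeFinset.card ≤ ((Finset.univ.image μ)ᶜ : Finset (Node n d k)).card := by
    apply Finset.card_le_card_of_injOn g
    · intro e he
      rw [Finset.mem_coe, SimpleGraph.mem_edgeFinset] at he
      have := (hg e he).1
      simp only [Finset.mem_coe, Finset.mem_compl, Finset.mem_image]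
      rintro ⟨i, -, h⟩
      exact this ⟨i, h⟩
    · intro a ha b hb hab
      rw [Finset.mem_coe, SimpleGraph.mem_edgeFinset] at ha hb
      rw [← (hg a ha).2, ← (hg b hb).2, hab]
  have h3 : (Finset.univ.image μ).card = r := by
    rw [Finset.card_image_of_injective _ hinj, Finset.card_univ, Fintype.card_fin]
  rw [Finset.card_compl, h3] at h2
  have h5 : r ≤ Fintype.card (Node n d k) := h3 ▸ Finset.card_le_univ _
  rw [card_comp] at h1
  omega

lemma buildNot {r : ℕ} (hcard : d + k - 1 + r ≤ Fintype.card (Node n d k))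
    (K : Finset (Node n d k)) (hK : K.card ≤ d + k - 1)
    (hconn : (remGraph n d k (↑K)ᶜ).Connected) {q : Node n d k} (hq : q ∈ K) :
    ∃ μ' : Fin r → Node n d k, Function.Injective μ' ∧ IsIrreducible μ' ∧ q ∉ Set.range μ' := by
  classical
  have hcc : r ≤ Kᶜ.card := by
    rw [Finset.card_compl]
    omega
  obtain ⟨S, hSsub, hScard⟩ := Finset.exists_subset_card_eq hcc
  obtain ⟨μ, hinj, hrange⟩ := exists_mu S hScard
  have hss : Set.range μ ⊆ (↑K : Set (Node n d k))ᶜ := by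
    rw [hrange]
    intro x hx
    simpa using Finset.mem_compl.mp (hSsub hx)
  refine ⟨μ, hinj, hconn.mono (remGraph_mono hss), ?_⟩
  rw [hrange]
  intro hqS
  exact Finset.mem_compl.mp (hSsub hqS) hq

lemma buildMem {r : ℕ} (hr : 0 < r) (hcard : d + k - 1 + r ≤ Fintype.card (Node n d k))
    (K : Finset (Node n d k)) (hK : K.card ≤ d + k - 1)
    (hconn : (remGraph n d k (↑K)ᶜ).Connected) {q : Node n d k} (hq : q ∉ K) :
    ∃ μ : Fin r → Node n d k, Function.Injective μ ∧ IsIrreducible μ ∧ q ∈ Set.range μ := by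
  classical
  have hsub : {q} ⊆ Kᶜ := by simp [hq]
  have hcc : (r - 1) + ({q} : Finset (Node n d k)).card ≤ Kᶜ.card := by
    rw [Finset.card_singleton, Finset.card_compl]
    omega
  obtain ⟨S, hqS, hSsub, hScard⟩ := Finset.exists_subsuperset_card_eq hsub (Nat.le_add_left _ _) hcc
  rw [Finset.card_singleton] at hScard
  have hScard' : S.card = r := by omega
  obtain ⟨μ, hinj, hrange⟩ := exists_mu S hScard'
  have hss : Set.range μ ⊆ (↑K : Set (Node n d k))ᶜ := by
    rw [hrange]
    intro x hx
    simpa using Finset.mem_compl.mp (hSsub hx)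
  refine ⟨μ, hinj, hconn.mono (remGraph_mono hss), ?_⟩
  rw [hrange]
  exact hqS (Finset.mem_singleton_self q)

/-- The unique node of multiplicity index `t` between distinct components `L_x` and `L_y`. -/
def lEdge (x y : Fin d) (hxy : x ≠ y) (t : Fin n) : Node n d k :=
  if h : x < y then Sum.inl ⟨⟨(x, y), h⟩, t⟩
  else Sum.inl ⟨⟨(y, x), lt_of_le_of_ne (not_lt.mp h) hxy.symm⟩, t⟩

lemma joins_lEdge (x y : Fin d) (hxy : x ≠ y) (t : Fin n) :
    joins (lEdge (k := k) x y hxy t) (Sum.inl x) (Sum.inl y) := by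
  unfold lEdge
  split
  · exact Or.inl rfl
  · exact Or.inr rfl

lemma lEdge_ne_inr (x y : Fin d) (hxy : x ≠ y) (t : Fin n) (p : Fin d × Fin k) :
    lEdge x y hxy t ≠ Sum.inr p := by
  unfold lEdge
  split <;> simp

lemma lEdge_inl_index {x y : Fin d} {hxy : x ≠ y} {s : Fin n}
    {p : ({p : Fin d × Fin d // p.1 < p.2}) × Fin n}
    (he : lEdge (k := k) x y hxy s = Sum.inl p) : p.2 = s := by
  unfold lEdge at he
  split at he <;> (rw [← Sum.inl.inj he])

end Aux


/-- Claim 3 of the paper. Let `r > 0` be an integer such that the set of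
irreducible `r`-markings on the curve `Γ` is nonempty. Then for any pair of distinct
components `C, C'` of `Γ` with `C.C' > 0` and for any node `q ∈ C ∩ C'`, there exist
irreducible `r`-markings `μ` and `μ'` such that `q` occurs in `μ` and `q` does not occur
in `μ'`. -/
theorem stmt0 (n d k r : ℕ) (hd : 0 < d) (hr : 0 < r)
    (hex : ∃ μ : Fin r → Node n d k, Function.Injective μ ∧ IsIrreducible μ)
    (C C' : Comp d k) (hCC : C ≠ C') (hpos : 0 < interNum n d k C C')
    (q : Node n d k) (hq : joins q C C') :
    (∃ μ : Fin r → Node n d k, Function.Injective μ ∧ IsIrreducible μ ∧ q ∈ Set.range μ) ∧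
    (∃ μ' : Fin r → Node n d k, Function.Injective μ' ∧ IsIrreducible μ' ∧ q ∉ Set.range μ') := by
  classical
  have hcard : d + k - 1 + r ≤ Fintype.card (Node n d k) := counting q hex
  constructor
  · -- Part 1: an irreducible marking containing `q`, via a spanning tree avoiding `q`.
    rcases q with ⟨⟨⟨a, b⟩, hab⟩, t⟩ | ⟨i, j⟩
    · -- `q` is an L-edge between `L_a` and `L_b`.
      have hn : 0 < n := t.pos
      have habn : (a : ℕ) < (b : ℕ) := hab
      by_cases hk : 0 < k
      · -- spanning tree made of F-edges only
        refine buildMem hr hcard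
          (treeK (Sum.inr ⟨0, hk⟩)
            (Sum.elim (fun m => Sum.inr (m, ⟨0, hk⟩)) (fun u => Sum.inr (a, u))))
          (treeK_card _ _) (tree_conn hd (Sum.inr ⟨0, hk⟩) _ ?_) ?_
        · intro v hv
          rcases v with m | u
          · exact Or.inl ⟨Sum.inr (m, ⟨0, hk⟩), mem_treeK hv, Or.inl rfl⟩
          · exact Or.inr ⟨Sum.inl a, ⟨Sum.inr (a, u), mem_treeK hv, Or.inr rfl⟩,
              ⟨Sum.inr (a, ⟨0, hk⟩), mem_treeK (v := Sum.inl a) (by simp), Or.inl rfl⟩⟩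
        · rw [mem_treeK_iff]
          rintro ⟨v, hv, hkv⟩
          rcases v with m | u <;> simp at hkv
      · by_cases hn2 : 2 ≤ n
        · -- spanning star at `L_a` using a parallel index `s ≠ t`
          set s : Fin n := if (t : ℕ) = 0 then ⟨1, hn2⟩ else ⟨0, hn⟩ with hs
          have hst : (s : ℕ) ≠ (t : ℕ) := by
            by_cases h : (t : ℕ) = 0
            · rw [hs, if_pos h]
              simp [h]
            · rw [hs, if_neg h]
              simpa using Ne.symm h
          refine buildMem hr hcard
            (treeK (Sum.inl a)
              (Sum.elim
                (fun m => if h : m = a then Sum.inl ⟨⟨(a, b), hab⟩, t⟩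
                  else lEdge a m (Ne.symm h) s)
                (fun _ => Sum.inl ⟨⟨(a, b), hab⟩, t⟩)))
            (treeK_card _ _) (tree_conn hd (Sum.inl a) _ ?_) ?_
          · intro v hv
            rcases v with m | u
            · have hm : m ≠ a := fun h => hv (by rw [h])
              refine Or.inl ⟨_, mem_treeK hv, ?_⟩
              simp only [Sum.elim_inl, dif_neg hm]
              exact joins_symm (joins_lEdge _ _ _ _)
            · exact absurd u.isLt (by omega)
          · rw [mem_treeK_iff]
            rintro ⟨v, hv, hkv⟩
            rcases v with m | u
            · have hm : m ≠ a := fun h => hv (by rw [h])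
              simp only [Sum.elim_inl, dif_neg hm] at hkv
              have := lEdge_inl_index hkv
              exact hst (congrArg Fin.val this.symm)
            · exact absurd u.isLt (by omega)
        · -- `k = 0`, `n = 1`: then `d ≥ 3`; star at a third component `L_c`
          have hn1 : n = 1 := by omega
          have hd3 : 3 ≤ d := by
            by_contra hd3
            have hd2 : d = 2 := by
              have := b.isLt
              omega
            have hk0 : k = 0 := by omega
            subst hd2
            subst hn1
            subst hk0
            have hcn : Fintype.card (Node 1 2 0) = 1 := by decide
            omega
          have hsd : (Finset.univ \ {a, b} : Finset (Fin d)).Nonempty := by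
            rw [← Finset.card_pos, Finset.card_sdiff_of_subset (Finset.subset_univ _),
              Finset.card_univ, Fintype.card_fin]
            have h2 : ({a, b} : Finset (Fin d)).card ≤ 2 :=
              (Finset.card_insert_le _ _).trans (by simp)
            omega
          obtain ⟨c, hc⟩ := hsd
          simp only [Finset.mem_sdiff, Finset.mem_univ, true_and, Finset.mem_insert,
            Finset.mem_singleton, not_or] at hc
          obtain ⟨hca, hcb⟩ := hc
          refine buildMem hr hcard
            (treeK (Sum.inl c)
              (Sum.elim
                (fun m => if h : m = c then Sum.inl ⟨⟨(a, b), hab⟩, t⟩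
                  else lEdge c m (Ne.symm h) t)
                (fun _ => Sum.inl ⟨⟨(a, b), hab⟩, t⟩)))
            (treeK_card _ _) (tree_conn hd (Sum.inl c) _ ?_) ?_
          · intro v hv
            rcases v with m | u
            · have hm : m ≠ c := fun h => hv (by rw [h])
              refine Or.inl ⟨_, mem_treeK hv, ?_⟩
              simp only [Sum.elim_inl, dif_neg hm]
              exact joins_symm (joins_lEdge _ _ _ _)
            · exact absurd u.isLt (by omega)
          · rw [mem_treeK_iff]
            rintro ⟨v, hv, hkv⟩
            rcases v with m | u
            · have hm : m ≠ c := fun h => hv (by rw [h])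
              simp only [Sum.elim_inl, dif_neg hm] at hkv
              have hj := joins_lEdge (k := k) c m (Ne.symm hm) t
              rw [hkv] at hj
              rcases hj with h | h
              · exact hca (Sum.inl.inj (congrArg Prod.fst h)).symm
              · exact hcb (Sum.inl.inj (congrArg Prod.snd h)).symm
            · exact absurd u.isLt (by omega)
    · -- `q` is an F-edge between `L_i` and `F_j`.
      have hk : 0 < k := j.pos
      have hd2 : 2 ≤ d := by
        by_contra hd2
        have hd1 : d = 1 := by omega
        subst hd1
        haveI : IsEmpty {p : Fin 1 × Fin 1 // p.1 < p.2} := ⟨fun p => by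
          have h2 : (p.1.1 : ℕ) < (p.1.2 : ℕ) := p.2
          have := p.1.1.isLt
          have := p.1.2.isLt
          omega⟩
        have hcn : Fintype.card (Node n 1 k) = k := by simp
        omega
      obtain ⟨i', hi'⟩ := Fintype.exists_ne_of_one_lt_card (by simp only [Fintype.card_fin]; omega) i
      by_cases hn : 0 < n
      · -- star at `L_{i'}` via L-edges
        refine buildMem hr hcard
          (treeK (Sum.inl i')
            (Sum.elim
              (fun m => if h : m = i' then Sum.inr (i, j)
                else lEdge i' m (Ne.symm h) ⟨0, hn⟩)
              (fun u => Sum.inr (i', u))))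
          (treeK_card _ _) (tree_conn hd (Sum.inl i') _ ?_) ?_
        · intro v hv
          rcases v with m | u
          · have hm : m ≠ i' := fun h => hv (by rw [h])
            refine Or.inl ⟨_, mem_treeK hv, ?_⟩
            simp only [Sum.elim_inl, dif_neg hm]
            exact joins_symm (joins_lEdge _ _ _ _)
          · exact Or.inl ⟨_, mem_treeK hv, Or.inr rfl⟩
        · rw [mem_treeK_iff]
          rintro ⟨v, hv, hkv⟩
          rcases v with m | u
          · have hm : m ≠ i' := fun h => hv (by rw [h])
            simp only [Sum.elim_inl, dif_neg hm] at hkv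
            exact lEdge_ne_inr _ _ _ _ _ hkv
          · simp only [Sum.elim_inr, Sum.inr.injEq, Prod.mk.injEq] at hkv
            exact hi' hkv.1
      · -- `n = 0`: then `k ≥ 2`; double star avoiding `F_j`
        have hk2 : 2 ≤ k := by
          by_contra hk2
          have hk1 : k = 1 := by omega
          have hn0 : n = 0 := by omega
          subst hk1
          subst hn0
          have hcn : Fintype.card (Node 0 d 1) = d := by simp
          omega
        obtain ⟨j', hj'⟩ := Fintype.exists_ne_of_one_lt_card (α := Fin k) (by simp only [Fintype.card_fin]; omega) j
        refine buildMem hr hcard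
          (treeK (Sum.inl i')
            (Sum.elim (fun m => Sum.inr (m, j')) (fun u => Sum.inr (i', u))))
          (treeK_card _ _) (tree_conn hd (Sum.inl i') _ ?_) ?_
        · intro v hv
          rcases v with m | u
          · exact Or.inr ⟨Sum.inr j', ⟨Sum.inr (m, j'), mem_treeK hv, Or.inl rfl⟩,
              ⟨Sum.inr (i', j'), mem_treeK (v := Sum.inr j') (by simp), Or.inr rfl⟩⟩
          · exact Or.inl ⟨_, mem_treeK hv, Or.inr rfl⟩
        · rw [mem_treeK_iff]
          rintro ⟨v, hv, hkv⟩
          rcases v with m | u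
          · simp only [Sum.elim_inl, Sum.inr.injEq, Prod.mk.injEq] at hkv
            exact hj' hkv.2
          · simp only [Sum.elim_inr, Sum.inr.injEq, Prod.mk.injEq] at hkv
            exact hi' hkv.1
  · -- Part 2: an irreducible marking avoiding `q`, via a spanning tree containing `q`.
    rcases q with ⟨⟨⟨a, b⟩, hab⟩, t⟩ | ⟨i, j⟩
    · -- `q` is an L-edge: star at `L_a` containing `q`.
      have hn : 0 < n := t.pos
      have habn : (a : ℕ) < (b : ℕ) := hab
      refine buildNot hcard
        (treeK (Sum.inl a)
          (Sum.elim
            (fun m => if m = b then Sum.inl ⟨⟨(a, b), hab⟩, t⟩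
              else if h : m = a then Sum.inl ⟨⟨(a, b), hab⟩, t⟩
              else lEdge a m (Ne.symm h) ⟨0, hn⟩)
            (fun u => Sum.inr (a, u))))
        (treeK_card _ _) (tree_conn hd (Sum.inl a) _ ?_) ?_
      · intro v hv
        rcases v with m | u
        · have hm : m ≠ a := fun h => hv (by rw [h])
          by_cases hmb : m = b
          · subst hmb
            refine Or.inl ⟨_, mem_treeK hv, ?_⟩
            simp only [Sum.elim_inl, if_pos rfl]
            exact Or.inr rfl
          · refine Or.inl ⟨_, mem_treeK hv, ?_⟩
            simp only [Sum.elim_inl, if_neg hmb, dif_neg hm]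
            exact joins_symm (joins_lEdge _ _ _ _)
        · exact Or.inl ⟨_, mem_treeK hv, Or.inr rfl⟩
      · rw [mem_treeK_iff]
        refine ⟨Sum.inl b, ?_, ?_⟩
        · simpa using (ne_of_lt hab).symm
        · simp
    · -- `q` is an F-edge: double star at `L_i` containing `q`.
      refine buildNot hcard
        (treeK (Sum.inl i)
          (Sum.elim (fun m => Sum.inr (m, j)) (fun u => Sum.inr (i, u))))
        (treeK_card _ _) (tree_conn hd (Sum.inl i) _ ?_) ?_
      · intro v hv
        rcases v with m | u
        · exact Or.inr ⟨Sum.inr j, ⟨Sum.inr (m, j), mem_treeK hv, Or.inl rfl⟩,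
            ⟨Sum.inr (i, j), mem_treeK (v := Sum.inr j) (by simp), Or.inr rfl⟩⟩
        · exact Or.inl ⟨_, mem_treeK hv, Or.inr rfl⟩
      · rw [mem_treeK_iff]
        exact ⟨Sum.inr j, by simp, rfl⟩


end SeveriMarkings
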